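/- Let C = (v₁, v₂, …, v_n, v₁) be a Hamiltonian cycle on a vertex set V of size n. Fix a partition of V into L labeled clusters and a symmetric 'friendship' relation on the clusters in which each cluster is related to at most s others. If the number of cycle edges (v_i, v_{i+1}) whose endpoints lie in non-friend, distinct clusters is at most m, then the number of possible labeled partitions realizing a fixed set of at most m unfriendly edges is at most L · (s+1)^n · L^m. -/

import Mathlib

open Finset

/-- Let `C = (v₁, …, v_n, v₁)` be a Hamiltonian cycle on a vertex set `V`
of size `n`. Fix `L` labeled clusters and a symmetric friendship relation on them in which
each cluster is related to at most `s` others. For any fixed set `U` of at most `m` cycle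
edges, the number of labeled partitions (cluster assignments `c : V → Fin L`) whose set of
unfriendly cycle edges is exactly `U` is at most `L · (s+1)^n · L^m`. -/
theorem stmt_11 {V : Type*} [Fintype V] [DecidableEq V] (n L s m : ℕ) [NeZero n]
    (hcard : Fintype.card V = n)
    (v : Fin n → V) (hv : Function.Bijective v)
    (friend : Fin L → Fin L → Prop) [DecidableRel friend] (hsym : Symmetric friend)
    (hdeg : ∀ F : Fin L, (Finset.univ.filter (fun F' => F' ≠ F ∧ friend F F')).card ≤ s)
    (U : Finset (Fin n)) (hU : U.card ≤ m) :
    (Finset.univ.filter (fun c : V → Fin L =>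
        Finset.univ.filter (fun i : Fin n =>
          c (v i) ≠ c (v (i + 1)) ∧ ¬ friend (c (v i)) (c (v (i + 1)))) = U)).card
      ≤ L * (s + 1) ^ n * L ^ m := by
  classical
  rcases Nat.eq_zero_or_pos L with hL | hL
  · subst hL
    have hne : Nonempty V := by
      have : 0 < Fintype.card V := by rw [hcard]; exact Nat.pos_of_ne_zero (NeZero.ne n)
      exact Fintype.card_pos_iff.mp this
    obtain ⟨x⟩ := hne
    have : IsEmpty (V → Fin 0) := ⟨fun c => (c x).elim0⟩
    simp
  -- main case
  set S : Fin L → Finset (Fin L) :=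
    fun F => insert F (Finset.univ.filter fun F' => F' ≠ F ∧ friend F F') with hS
  have hScard : ∀ F, (S F).card ≤ s + 1 := by
    intro F
    calc (S F).card ≤ (Finset.univ.filter fun F' => F' ≠ F ∧ friend F F').card + 1 :=
          Finset.card_insert_le _ _
      _ ≤ s + 1 := by exact Nat.add_le_add_right (hdeg F) 1
  set encode : (V → Fin L) → Fin L × ({i // i ∈ U} → Fin L) × (Fin n → Fin (s + 1)) :=
    fun c => (c (v 0), fun i => c (v (i.1 + 1)),
      fun i => ⟨((S (c (v i))).toList.idxOf (c (v (i + 1)))) % (s + 1),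
        Nat.mod_lt _ (Nat.succ_pos s)⟩) with hEnc
  have hmem : ∀ c : V → Fin L,
      (Finset.univ.filter (fun i : Fin n =>
          c (v i) ≠ c (v (i + 1)) ∧ ¬ friend (c (v i)) (c (v (i + 1)))) = U) →
      ∀ i : Fin n, i ∉ U → c (v (i + 1)) ∈ S (c (v i)) := by
    intro c hc i hiU
    have : i ∉ Finset.univ.filter (fun i : Fin n =>
        c (v i) ≠ c (v (i + 1)) ∧ ¬ friend (c (v i)) (c (v (i + 1)))) := by
      rw [hc]; exact hiU
    simp only [Finset.mem_filter, Finset.mem_univ, true_and, not_and, not_not] at this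
    by_cases h : c (v i) = c (v (i + 1))
    · rw [hS]; simp [← h]
    · have hf := this h
      rw [hS]
      simp only [Finset.mem_insert, Finset.mem_filter, Finset.mem_univ, true_and]
      exact Or.inr ⟨fun he => h he.symm, hf⟩
  have hinj : Set.InjOn encode (Finset.univ.filter (fun c : V → Fin L =>
        Finset.univ.filter (fun i : Fin n =>
          c (v i) ≠ c (v (i + 1)) ∧ ¬ friend (c (v i)) (c (v (i + 1)))) = U) : Finset _) := by
    intro c1 hc1 c2 hc2 heq
    simp only [Finset.coe_filter, Set.mem_setOf_eq, Finset.mem_univ, true_and] at hc1 hc2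
    rw [hEnc, Prod.ext_iff, Prod.ext_iff] at heq
    obtain ⟨h1, h2, h3⟩ := heq
    simp only at h1 h2 h3
    have key : ∀ k, (hk : k < n) → c1 (v ⟨k, hk⟩) = c2 (v ⟨k, hk⟩) := by
      intro k
      induction k with
      | zero =>
        intro hk
        have h0 : (⟨0, hk⟩ : Fin n) = 0 := by
          apply Fin.ext; simp
        rw [h0]; exact h1
      | succ k ih =>
        intro hk
        have hkn : k < n := Nat.lt_of_succ_lt hk
        set i : Fin n := ⟨k, hkn⟩ with hi
        have hik : c1 (v i) = c2 (v i) := ih hkn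
        have h1n : (1 : Fin n).val = 1 := by rw [Fin.val_one']; exact Nat.mod_eq_of_lt (by omega)
        have hi1 : i + 1 = ⟨k + 1, hk⟩ := by
          apply Fin.ext
          rw [Fin.add_def, h1n]
          simpa using Nat.mod_eq_of_lt hk
        rw [← hi1]
        by_cases hiU : i ∈ U
        · exact congrFun h2 ⟨i, hiU⟩
        · have mem1 : c1 (v (i + 1)) ∈ S (c1 (v i)) := hmem c1 hc1 i hiU
          have mem2 : c2 (v (i + 1)) ∈ S (c2 (v i)) := hmem c2 hc2 i hiU
          rw [hik] at mem1
          have h3i := congrFun h3 i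
          rw [hik] at h3i
          have hval := congrArg Fin.val h3i
          simp only at hval
          set l := (S (c2 (v i))).toList with hl
          have hlen : l.length ≤ s + 1 := by
            rw [hl, Finset.length_toList]; exact hScard _
          have hm1 : l.idxOf (c1 (v (i + 1))) < l.length :=
            List.idxOf_lt_length_iff.mpr (by rw [hl, Finset.mem_toList]; exact mem1)
          have hm2 : l.idxOf (c2 (v (i + 1))) < l.length :=
            List.idxOf_lt_length_iff.mpr (by rw [hl, Finset.mem_toList]; exact mem2)
          have hidx : l.idxOf (c1 (v (i + 1))) = l.idxOf (c2 (v (i + 1))) := by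
            rwa [Nat.mod_eq_of_lt (lt_of_lt_of_le hm1 hlen),
              Nat.mod_eq_of_lt (lt_of_lt_of_le hm2 hlen)] at hval
          have e1 := List.idxOf_get hm1
          have e2 := List.idxOf_get hm2
          rw [← e1, ← e2]
          congr 1
          exact Fin.ext hidx
    funext x
    obtain ⟨j, rfl⟩ := hv.2 x
    have := key j.1 j.2
    simpa using this
  have hle := Finset.card_le_card_of_injOn encode (fun _ _ => Finset.mem_univ _) hinj
  have hcardT : (Finset.univ : Finset (Fin L × ({i // i ∈ U} → Fin L) × (Fin n → Fin (s + 1)))).card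
      = L * (L ^ U.card * (s + 1) ^ n) := by
    simp [Fintype.card_fun]
  rw [hcardT] at hle
  calc _ ≤ L * (L ^ U.card * (s + 1) ^ n) := hle
    _ = L * (s + 1) ^ n * L ^ U.card := by ring
    _ ≤ L * (s + 1) ^ n * L ^ m :=
        Nat.mul_le_mul_left _ (Nat.pow_le_pow_right hL hU)
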